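/- For all integers r ≥ 3, s ≥ 3 and t, the triangulation T(r,s,t) admits a proper 3-coloring if and only if r ≡ 0 (mod 3) and s − t ≡ 0 (mod 3). -/

import Mathlib

/-- The subgroup Λ of ℤ² generated by (r,0) and (−t,s). -/
def torusLattice (r s t : ℤ) : AddSubgroup (ℤ × ℤ) :=
  AddSubgroup.closure {(r, 0), (-t, s)}

/-- The vertex set ℤ²/Λ of the triangulation T(r,s,t). -/
abbrev TorusV (r s t : ℤ) := (ℤ × ℤ) ⧸ torusLattice r s t

/-- The quotient map ℤ² → ℤ²/Λ. -/
def tmk (r s t : ℤ) : (ℤ × ℤ) →+ TorusV r s t := QuotientAddGroup.mk' (torusLattice r s t)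

/-- The six neighbour displacement vectors. -/
def hexDirs : Finset (ℤ × ℤ) := {(1,0), (-1,0), (0,1), (0,-1), (1,1), (-1,-1)}

/-- The triangulation T(r,s,t) of the torus: two distinct vertices are adjacent
iff their difference is the image of one of the six displacement vectors. -/
def TriT (r s t : ℤ) : SimpleGraph (TorusV r s t) where
  Adj u v := u ≠ v ∧ ∃ d ∈ hexDirs, v - u = tmk r s t d
  symm := ⟨by
    rintro u v ⟨hne, d, hd, hsub⟩
    refine ⟨hne.symm, -d, ?_, ?_⟩
    · fin_cases hd <;> decide
    · rw [show u - v = -(v - u) from (neg_sub v u).symm, hsub, ← map_neg]⟩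
  loopless := ⟨fun u h => h.1 rfl⟩

/-- A proper `q`-coloring of a simple graph. -/
def IsProperColoring {V : Type*} (G : SimpleGraph V) {q : ℕ} (f : V → Fin q) : Prop :=
  ∀ ⦃u v : V⦄, G.Adj u v → f u ≠ f v

lemma mem_lat (r s t : ℤ) (p : ℤ × ℤ) :
    p ∈ torusLattice r s t ↔ ∃ m n : ℤ, m * r - n * t = p.1 ∧ n * s = p.2 := by
  rw [torusLattice, AddSubgroup.mem_closure_pair]
  constructor
  · rintro ⟨m, n, rfl⟩
    refine ⟨m, n, by simp [Prod.ext_iff, smul_eq_mul]; ring_nf, by simp [Prod.ext_iff, smul_eq_mul]⟩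
  · rintro ⟨m, n, h1, h2⟩
    exact ⟨m, n, by simp [Prod.ext_iff, smul_eq_mul]; constructor <;> [linarith; linarith]⟩

lemma tmk_eq_zero_iff (r s t : ℤ) (p : ℤ × ℤ) :
    tmk r s t p = 0 ↔ p ∈ torusLattice r s t := by
  rw [tmk, QuotientAddGroup.mk'_apply, QuotientAddGroup.eq_zero_iff]

lemma tmk_ne_zero (r s t : ℤ) (hr : 3 ≤ r) (hs : 3 ≤ s) (p : ℤ × ℤ)
    (hp : p = (1,0) ∨ p = (0,1) ∨ p = (1,1)) : tmk r s t p ≠ 0 := by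
  intro h0
  rw [tmk_eq_zero_iff, mem_lat] at h0
  obtain ⟨m, n, h1, h2⟩ := h0
  rcases hp with rfl | rfl | rfl <;> simp at h1 h2
  · rcases h2 with rfl | h2'
    swap
    · omega
    simp at h1
    have : r ∣ 1 := Dvd.intro_left m h1
    have := Int.le_of_dvd one_pos this
    omega
  all_goals {
    have : s ∣ 1 := Dvd.intro_left n h2
    have := Int.le_of_dvd one_pos this
    omega }

lemma adj_add (r s t : ℤ) (u : TorusV r s t) (d : ℤ × ℤ) (hd : d ∈ hexDirs)
    (hnz : tmk r s t d ≠ 0) : (TriT r s t).Adj u (u + tmk r s t d) := by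
  refine ⟨fun h => hnz ?_, d, hd, by abel⟩
  exact (left_eq_add.mp h)

lemma zmod3_eq_of_ne (x y c0 c2 : ZMod 3) (h1 : x ≠ c0) (h2 : x ≠ c2) (h3 : y ≠ c0)
    (h4 : y ≠ c2) (h5 : c0 ≠ c2) : x = y := by revert h1 h2 h3 h4 h5; revert x y c0 c2; decide

lemma zmod3_add_ne (a b : ZMod 3) (h1 : a ≠ 0) (h2 : b ≠ 0) (h3 : a + b ≠ 0) : a = b := by
  revert h1 h2 h3; revert a b; decide

lemma zmod3_mul_eq_zero (a x : ZMod 3) (h1 : a ≠ 0) (h2 : x * a = 0) : x = 0 := by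
  revert h1 h2; revert a x; decide

/-- The triangulation T(r,s,t) admits a proper 3-coloring if and only if
`r ≡ 0 (mod 3)` and `s − t ≡ 0 (mod 3)`. -/
theorem threeColorable_iff (r s t : ℤ) (hr : 3 ≤ r) (hs : 3 ≤ s) :
    (∃ f : TorusV r s t → Fin 3, IsProperColoring (TriT r s t) f) ↔
      (3 : ℤ) ∣ r ∧ (3 : ℤ) ∣ (s - t) := by
  constructor
  · rintro ⟨f, hf⟩
    set g : TorusV r s t → ZMod 3 := fun u => f u with hg
    set e1 : TorusV r s t := tmk r s t (1,0) with he1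
    set e2 : TorusV r s t := tmk r s t (0,1) with he2
    have he12 : tmk r s t (1,1) = e1 + e2 := by
      rw [he1, he2, ← map_add]; norm_num
    have hne1 : ∀ u : TorusV r s t, g (u + e1) ≠ g u := by
      intro u
      exact fun h => hf (adj_add r s t u (1,0) (by decide)
        (tmk_ne_zero r s t hr hs _ (by tauto))) h.symm
    have hne2 : ∀ u : TorusV r s t, g (u + e2) ≠ g u := by
      intro u
      exact fun h => hf (adj_add r s t u (0,1) (by decide)
        (tmk_ne_zero r s t hr hs _ (by tauto))) h.symm
    have hne12 : ∀ u : TorusV r s t, g (u + (e1 + e2)) ≠ g u := by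
      intro u
      rw [← he12]
      exact fun h => hf (adj_add r s t u (1,1) (by decide)
        (tmk_ne_zero r s t hr hs _ (by tauto))) h.symm
    have heq : ∀ u : TorusV r s t, g (u + e1) = g (u + e2) := by
      intro u
      refine zmod3_eq_of_ne _ _ (g u) (g (u + (e1 + e2))) (hne1 u) ?_ (hne2 u) ?_
        (fun h => hne12 u h.symm)
      · rw [show u + (e1 + e2) = (u + e1) + e2 by abel]
        exact fun h => hne2 (u + e1) h.symm
      · rw [show u + (e1 + e2) = (u + e2) + e1 by abel]
        exact fun h => hne1 (u + e2) h.symm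
    set A : TorusV r s t → ZMod 3 := fun u => g (u + e1) - g u with hA
    have hAne : ∀ u, A u ≠ 0 := fun u => sub_ne_zero.2 (hne1 u)
    have hsum : ∀ u : TorusV r s t, g (u + (e1 + e2)) - g u = A (u + e1) + A u := by
      intro u
      have h' : g (u + (e1 + e2)) = g ((u + e1) + e2) := by
        rw [show u + (e1+e2) = (u+e1)+e2 by abel]
      rw [h', ← heq (u + e1)]
      simp only [hA]
      abel
    have hsum2 : ∀ u : TorusV r s t, g (u + (e1 + e2)) - g u = A (u + e2) + A u := by
      intro u
      have h' : g (u + (e1 + e2)) = g ((u + e2) + e1) := by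
        rw [show u + (e1+e2) = (u+e2)+e1 by abel]
      rw [h']
      simp only [hA]
      rw [← heq u]
      abel
    have hA1 : ∀ u, A (u + e1) = A u := by
      intro u
      refine zmod3_add_ne _ _ (hAne _) (hAne _) ?_
      rw [← hsum u]
      exact sub_ne_zero.2 (hne12 u)
    have hA2 : ∀ u, A (u + e2) = A u := by
      intro u
      refine zmod3_add_ne _ _ (hAne _) (hAne _) ?_
      rw [← hsum2 u]
      exact sub_ne_zero.2 (hne12 u)
    have hAz1 : ∀ (n : ℤ) (u), A (u + n • e1) = A u := by
      intro n
      induction n using Int.induction_on with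
      | zero => simp
      | succ k ih =>
          intro u
          rw [show u + (k+1 : ℤ) • e1 = (u + (k : ℤ) • e1) + e1 by rw [add_zsmul]; simp; abel,
            hA1, ih]
      | pred k ih =>
          intro u
          have h' := hA1 (u + (-k-1 : ℤ) • e1)
          rw [show u + (-k-1 : ℤ) • e1 + e1 = u + (-k : ℤ) • e1 by
              rw [sub_zsmul]; simp; abel] at h'
          rw [← h', ih]
    have hAz2 : ∀ (n : ℤ) (u), A (u + n • e2) = A u := by
      intro n
      induction n using Int.induction_on with
      | zero => simp
      | succ k ih =>
          intro u
          rw [show u + (k+1 : ℤ) • e2 = (u + (k : ℤ) • e2) + e2 by rw [add_zsmul]; simp; abel,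
            hA2, ih]
      | pred k ih =>
          intro u
          have h' := hA2 (u + (-k-1 : ℤ) • e2)
          rw [show u + (-k-1 : ℤ) • e2 + e2 = u + (-k : ℤ) • e2 by
              rw [sub_zsmul]; simp; abel] at h'
          rw [← h', ih]
    have htmk_decomp : ∀ z : ℤ × ℤ, tmk r s t z = z.1 • e1 + z.2 • e2 := by
      intro z
      rw [he1, he2, ← map_zsmul, ← map_zsmul, ← map_add]
      congr 1
      simp [Prod.ext_iff, smul_eq_mul]
    have hAconst : ∀ u, A u = A 0 := by
      intro u
      obtain ⟨z, rfl⟩ := QuotientAddGroup.mk'_surjective (torusLattice r s t) u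
      have h' : (QuotientAddGroup.mk' (torusLattice r s t)) z = tmk r s t z := rfl
      rw [h', htmk_decomp z, ← zero_add (z.1 • e1 + z.2 • e2), ← add_assoc, hAz2, hAz1]
    set ε : ZMod 3 := A 0 with hε
    have hεne : ε ≠ 0 := hAne 0
    have hstep1 : ∀ u, g (u + e1) = g u + ε := by
      intro u
      have h' : A u = ε := hAconst u
      rw [← h']
      simp only [hA]
      abel
    have hstep2 : ∀ u, g (u + e2) = g u + ε := by
      intro u
      rw [← heq u]
      exact hstep1 u
    have hiter1 : ∀ (n : ℤ) (u), g (u + n • e1) = g u + n • ε := by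
      intro n
      induction n using Int.induction_on with
      | zero => simp
      | succ k ih =>
          intro u
          rw [show u + (k+1 : ℤ) • e1 = (u + (k : ℤ) • e1) + e1 by rw [add_zsmul]; simp; abel,
            hstep1, ih, add_zsmul]
          simp
          abel
      | pred k ih =>
          intro u
          have h' := hstep1 (u + (-k-1 : ℤ) • e1)
          rw [show u + (-k-1 : ℤ) • e1 + e1 = u + (-k : ℤ) • e1 by
              rw [sub_zsmul]; simp; abel, ih] at h'
          have h2 : g (u + (-k-1 : ℤ) • e1) = g u + (-k : ℤ) • ε - ε := by
            rw [eq_sub_iff_add_eq, ← h']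
          rw [h2, sub_zsmul]
          simp
          abel
    have hiter2 : ∀ (n : ℤ) (u), g (u + n • e2) = g u + n • ε := by
      intro n
      induction n using Int.induction_on with
      | zero => simp
      | succ k ih =>
          intro u
          rw [show u + (k+1 : ℤ) • e2 = (u + (k : ℤ) • e2) + e2 by rw [add_zsmul]; simp; abel,
            hstep2, ih, add_zsmul]
          simp
          abel
      | pred k ih =>
          intro u
          have h' := hstep2 (u + (-k-1 : ℤ) • e2)
          rw [show u + (-k-1 : ℤ) • e2 + e2 = u + (-k : ℤ) • e2 by
              rw [sub_zsmul]; simp; abel, ih] at h'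
          have h2 : g (u + (-k-1 : ℤ) • e2) = g u + (-k : ℤ) • ε - ε := by
            rw [eq_sub_iff_add_eq, ← h']
          rw [h2, sub_zsmul]
          simp
          abel
    have hgen : ∀ z : ℤ × ℤ, g (tmk r s t z) = g 0 + (z.1 + z.2) • ε := by
      intro z
      rw [htmk_decomp z, ← zero_add (z.1 • e1 + z.2 • e2), ← add_assoc, hiter2, hiter1, add_zsmul]
      abel
    have key : ∀ z : ℤ × ℤ, z ∈ torusLattice r s t → ((z.1 + z.2 : ℤ) : ZMod 3) = 0 := by
      intro z hz
      have h0 : tmk r s t z = 0 := (tmk_eq_zero_iff r s t z).2 hz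
      have h' := hgen z
      rw [h0] at h'
      have hε0 : (z.1 + z.2 : ℤ) • ε = 0 := by
        have h'' := h'.symm
        rwa [add_eq_left] at h''
      rw [zsmul_eq_mul] at hε0
      exact zmod3_mul_eq_zero ε _ hεne hε0
    constructor
    · have hmem : ((r, 0) : ℤ × ℤ) ∈ torusLattice r s t :=
        AddSubgroup.subset_closure (by left; rfl)
      have h' := key (r, 0) hmem
      exact (ZMod.intCast_zmod_eq_zero_iff_dvd r 3).1 (by simpa using h')
    · have hmem : ((-t, s) : ℤ × ℤ) ∈ torusLattice r s t :=
        AddSubgroup.subset_closure (by right; rfl)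
      have h' := key (-t, s) hmem
      have h'' : ((s - t : ℤ) : ZMod 3) = 0 := by push_cast at h' ⊢; linear_combination h'
      exact (ZMod.intCast_zmod_eq_zero_iff_dvd _ 3).1 h''
  · rintro ⟨hr3, hst3⟩
    set φ : (ℤ × ℤ) →+ ZMod 3 :=
      { toFun := fun p => ((p.1 + p.2 : ℤ) : ZMod 3)
        map_zero' := by simp
        map_add' := by intro a b; simp only [Prod.fst_add, Prod.snd_add]; push_cast; ring } with hφ
    have hker : torusLattice r s t ≤ φ.ker := by
      rw [torusLattice, AddSubgroup.closure_le]
      rintro p (rfl | rfl) <;>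
        simp only [AddMonoidHom.mem_ker, SetLike.mem_coe, hφ, AddMonoidHom.coe_mk,
          ZeroHom.coe_mk, Set.mem_singleton_iff]
      · simpa using (ZMod.intCast_zmod_eq_zero_iff_dvd r 3).2 hr3
      · have h'' := (ZMod.intCast_zmod_eq_zero_iff_dvd (s - t) 3).2 hst3
        push_cast at h'' ⊢
        linear_combination h''
    set F : TorusV r s t → ZMod 3 := ⇑(QuotientAddGroup.lift (torusLattice r s t) φ hker) with hF
    have hFadd : ∀ (u : TorusV r s t) (z : ℤ × ℤ), F (u + tmk r s t z) = F u + φ z := by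
      intro u z
      obtain ⟨w, rfl⟩ := QuotientAddGroup.mk'_surjective (torusLattice r s t) u
      have h' : (QuotientAddGroup.mk' (torusLattice r s t)) w + tmk r s t z
          = tmk r s t (w + z) := by
        rw [map_add]; rfl
      rw [h']
      show φ (w + z) = φ w + φ z
      exact map_add φ w z
    refine ⟨fun u => F u, ?_⟩
    rintro u v ⟨hne, d, hd, hsub⟩
    have hv : v = u + tmk r s t d := by rw [← hsub]; abel
    subst hv
    show F u ≠ F (u + tmk r s t d)
    rw [hFadd]
    intro hcontra
    have hz : φ d = 0 := by
      have h'' := hcontra.symm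
      rwa [add_eq_left] at h''
    fin_cases hd <;> revert hz <;>
      simp only [hφ, AddMonoidHom.coe_mk, ZeroHom.coe_mk] <;> decide
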